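/- Let k be a field of characteristic p > 0 and A an associative unital k-algebra. Then for all a, b ∈ A and every n ∈ ℕ, the element (a + b)^{p^n} − a^{p^n} − b^{p^n} lies in KA. Consequently the p^n-power map induces a well-defined additive map on the quotient k-vector space A/KA. -/

import Mathlib

set_option linter.unusedSectionVars false
set_option maxHeartbeats 1000000



/-- `KA`: the `k`-linear span in `A` of all commutators `a*b - b*a`. -/
def commutatorSpan (k A : Type*) [Field k] [Ring A] [Algebra k A] : Submodule k A :=
  Submodule.span k {x : A | ∃ a b : A, x = a * b - b * a}

namespace JacobsonAux

section Defs

variable {A : Type*} [Ring A]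

def e (a b : A) (c : Bool) : A := cond c a b

def WFin (a b : A) {n : ℕ} (g : Fin n → Bool) : A := (List.ofFn fun i => e a b (g i)).prod

def cz (p : ℕ) (i : Fin p) : ZMod p := (i.val : ZMod p)

def W (a b : A) (p : ℕ) (f : ZMod p → Bool) : A := WFin a b (fun i => f (cz p i))

lemma cz_add {p : ℕ} [NeZero p] (i j : Fin p) : cz p (i + j) = cz p i + cz p j := by
  unfold cz
  rw [Fin.add_def]
  push_cast [ZMod.natCast_mod]
  ring

lemma cz_one {p : ℕ} [NeZero p] : cz p (1 : Fin p) = 1 := by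
  unfold cz
  rw [Fin.val_one', ZMod.natCast_mod]
  norm_num

lemma cz_bij {p : ℕ} [NeZero p] : Function.Bijective (cz p) := by
  rw [Fintype.bijective_iff_injective_and_card]
  constructor
  · intro i j h
    have hi : (cz p i).val = i.val := ZMod.val_cast_of_lt i.isLt
    have hj : (cz p j).val = j.val := ZMod.val_cast_of_lt j.isLt
    exact Fin.ext (by rw [← hi, ← hj, h])
  · simp [ZMod.card]

lemma expand (a b : A) (n : ℕ) : (a + b) ^ n = ∑ g : Fin n → Bool, WFin a b g := by
  induction n with
  | zero => simp [WFin]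
  | succ n ih =>
    rw [pow_succ', ih]
    rw [Fintype.sum_equiv (Fin.consEquiv (fun _ : Fin (n+1) => Bool)).symm
      (fun g => WFin a b g) (fun cg => e a b cg.1 * WFin a b cg.2)
      (fun g => by
        simp only [WFin, List.ofFn_succ, List.prod_cons]; rfl)]
    rw [Fintype.sum_prod_type, Fintype.sum_bool]
    simp only [e, cond_true, cond_false]
    rw [add_mul, ← Finset.mul_sum, ← Finset.mul_sum]

end Defs

variable {k A : Type*} [Field k] [Ring A] [Algebra k A]

lemma mk_mul_comm (x y : A) :
    (Submodule.Quotient.mk (x * y) : A ⧸ commutatorSpan k A) = Submodule.Quotient.mk (y * x) := by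
  rw [Submodule.Quotient.eq]; exact Submodule.subset_span ⟨x, y, rfl⟩

lemma mk_prod_rotate (x : A) (l : List A) :
    (Submodule.Quotient.mk ((x :: l).prod) : A ⧸ commutatorSpan k A) =
      Submodule.Quotient.mk ((l ++ [x]).prod) := by
  rw [List.prod_cons, List.prod_append, List.prod_singleton]; exact mk_mul_comm x l.prod

lemma mk_prod_ofFn_rot {n : ℕ} (v : Fin (n + 1) → A) :
    (Submodule.Quotient.mk ((List.ofFn (fun i => v (i + 1))).prod) : A ⧸ commutatorSpan k A) =
      Submodule.Quotient.mk ((List.ofFn v).prod) := by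
  have h : List.ofFn (fun i => v (i + 1)) = List.ofFn (v ∘ Fin.succ) ++ [v 0] := by
    rw [List.ofFn_succ' (fun i => v (i + 1))]
    simp only [Fin.coeSucc_eq_succ, Fin.last_add_one, List.concat_eq_append]; rfl
  rw [h, List.ofFn_succ]
  exact (mk_prod_rotate (v 0) (List.ofFn (v ∘ Fin.succ))).symm

variable (a b : A) (p : ℕ) [NeZero p]

lemma mk_W_rot1 (f : ZMod p → Bool) :
    (Submodule.Quotient.mk (W a b p (fun x => f (x + 1))) : A ⧸ commutatorSpan k A) =
      Submodule.Quotient.mk (W a b p f) := by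
  obtain ⟨m, rfl⟩ := Nat.exists_eq_succ_of_ne_zero (NeZero.ne p)
  unfold W WFin
  have h1 : (fun i : Fin (m + 1) => e a b ((fun x => f (x + 1)) (cz (m+1) i)))
      = fun i : Fin (m+1) => (fun j : Fin (m+1) => e a b (f (cz (m+1) j))) (i + 1) := by
    funext i
    simp only
    rw [cz_add, cz_one]
  rw [h1]
  exact mk_prod_ofFn_rot (k := k) (fun j : Fin (m+1) => e a b (f (cz (m+1) j)))

lemma mk_W_rotn (f : ZMod p → Bool) (t : ℕ) :
    (Submodule.Quotient.mk (W a b p (fun x => f (x + t))) : A ⧸ commutatorSpan k A) =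
      Submodule.Quotient.mk (W a b p f) := by
  induction t with
  | zero => simp
  | succ t ih =>
    have h1 : (fun x : ZMod p => f (x + (t+1 : ℕ))) = fun x => (fun y => f (y + t)) (x + 1) := by
      funext x; push_cast; ring_nf
    rw [h1, mk_W_rot1 a b p (fun y => f (y + t)), ih]

lemma mk_W_rot (f : ZMod p → Bool) (σ : ZMod p) :
    (Submodule.Quotient.mk (W a b p (fun x => f (x + σ))) : A ⧸ commutatorSpan k A) =
      Submodule.Quotient.mk (W a b p f) := by
  have h : σ = ((σ.val : ℕ) : ZMod p) := (ZMod.natCast_rightInverse σ).symm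
  rw [h]
  exact mk_W_rotn a b p f σ.val


def rotSetoid (p : ℕ) : Setoid (ZMod p → Bool) where
  r := fun f g => ∃ σ, g = fun x => f (x + σ)
  iseqv := by
    refine ⟨fun f => ⟨0, by simp⟩, ?_, ?_⟩
    · rintro f g ⟨σ, rfl⟩
      exact ⟨-σ, by funext x; simp⟩
    · rintro f g h ⟨σ, rfl⟩ ⟨τ, rfl⟩
      exact ⟨τ + σ, by funext x; simp [add_assoc]⟩

lemma orbit_inj {p : ℕ} [Fact p.Prime] (f : ZMod p → Bool) (hf : ¬ ∃ c, f = fun _ => c) :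
    Function.Injective fun σ : ZMod p => (fun x => f (x + σ) : ZMod p → Bool) := by
  intro σ τ h
  by_contra hne
  set δ := σ - τ with hδdef
  have hδ0 : δ ≠ 0 := sub_ne_zero.mpr hne
  have hper : ∀ x, f (x + δ) = f x := by
    intro x
    have h1 := congrFun h (x - τ)
    simp only at h1
    have e1 : x - τ + σ = x + δ := by rw [hδdef]; ring
    have e2 : x - τ + τ = x := by ring
    rw [← e1, h1, e2]
  have hiter : ∀ (t : ℕ) (x : ZMod p), f (x + t • δ) = f x := by
    intro t
    induction t with
    | zero => simp
    | succ t ih =>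
      intro x
      have e3 : x + (t + 1) • δ = (x + δ) + t • δ := by rw [succ_nsmul]; ring
      rw [e3, ih, hper]
  apply hf
  refine ⟨f 0, funext fun x => ?_⟩
  have e4 : (0 : ZMod p) + ((x * δ⁻¹).val) • δ = x := by
    rw [nsmul_eq_mul, ZMod.natCast_rightInverse _, zero_add, mul_assoc,
      inv_mul_cancel₀ hδ0, mul_one]
  conv_lhs => rw [← e4]
  exact hiter _ 0


variable [Fact p.Prime] [CharP k p]

lemma cast_p_eq_zero (k : Type*) [Field k] {A : Type*} [Ring A] [Algebra k A]
    (p : ℕ) [CharP k p] : ((p : ℕ) : A) = 0 := by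
  have h : ((p : ℕ) : A) = algebraMap k A ((p : ℕ) : k) := by rw [map_natCast]
  rw [h, CharP.cast_eq_zero k p, map_zero]

lemma mk_p_nsmul (x : A) :
    (Submodule.Quotient.mk (p • x) : A ⧸ commutatorSpan k A) = 0 := by
  rw [nsmul_eq_mul, cast_p_eq_zero k (A := A) p, zero_mul, Submodule.Quotient.mk_eq_zero]
  exact Submodule.zero_mem _

lemma key : (Submodule.Quotient.mk ((a + b) ^ p) : A ⧸ commutatorSpan k A) =
    Submodule.Quotient.mk (a ^ p) + Submodule.Quotient.mk (b ^ p) := by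
  classical
  -- Step 1: expand
  have h1 : (Submodule.Quotient.mk ((a + b) ^ p) : A ⧸ commutatorSpan k A)
      = ∑ g : Fin p → Bool, Submodule.Quotient.mk (WFin a b g) := by
    rw [expand a b p, ← Submodule.mkQ_apply, map_sum]
    rfl
  -- Step 2: reindex by ZMod p
  have h2 : ∑ g : Fin p → Bool, (Submodule.Quotient.mk (WFin a b g) : A ⧸ commutatorSpan k A)
      = ∑ f : ZMod p → Bool, Submodule.Quotient.mk (W a b p f) := by
    refine Fintype.sum_equiv (Equiv.arrowCongr (Equiv.ofBijective (cz p) cz_bij)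
      (Equiv.refl Bool)) _ _ (fun g => ?_)
    congr 1
    show WFin a b g = W a b p _
    unfold W
    congr 1
    funext i
    exact congrArg g ((Equiv.ofBijective (cz p) cz_bij).symm_apply_apply i).symm
  rw [h1, h2]
  have hsplit := Finset.sum_filter_add_sum_filter_not (Finset.univ : Finset (ZMod p → Bool))
    (fun f => ∃ c, f = fun _ => c)
    (fun f => (Submodule.Quotient.mk (W a b p f) : A ⧸ commutatorSpan k A))
  rw [← hsplit]
  have hTF : ((fun _ => true) : ZMod p → Bool) ≠ (fun _ => false) := by
    intro h; simpa using congrFun h 0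
  have hfilter : Finset.univ.filter (fun f : ZMod p → Bool => ∃ c, f = fun _ => c)
      = {(fun _ => true), (fun _ => false)} := by
    ext g
    simp only [Finset.mem_filter, Finset.mem_univ, true_and, Finset.mem_insert,
      Finset.mem_singleton]
    constructor
    · rintro ⟨c, rfl⟩; cases c
      · right; rfl
      · left; rfl
    · rintro (rfl | rfl)
      exacts [⟨true, rfl⟩, ⟨false, rfl⟩]
  have hWa : W a b p (fun _ => true) = a ^ p := by
    simp [W, WFin, e, List.ofFn_const, List.prod_replicate]
  have hWb : W a b p (fun _ => false) = b ^ p := by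
    simp [W, WFin, e, List.ofFn_const, List.prod_replicate]
  have hconst : ∑ f ∈ Finset.univ.filter (fun f : ZMod p → Bool => ∃ c, f = fun _ => c),
      (Submodule.Quotient.mk (W a b p f) : A ⧸ commutatorSpan k A)
      = Submodule.Quotient.mk (a ^ p) + Submodule.Quotient.mk (b ^ p) := by
    rw [hfilter, Finset.sum_pair hTF, hWa, hWb]
  have hrest : ∑ f ∈ Finset.univ.filter (fun f : ZMod p → Bool => ¬∃ c, f = fun _ => c),
      (Submodule.Quotient.mk (W a b p f) : A ⧸ commutatorSpan k A) = 0 := by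
    rw [Finset.sum_partition (rotSetoid p)]
    refine Finset.sum_eq_zero (fun xbar hxbar => ?_)
    obtain ⟨f, hfmem, rfl⟩ := Finset.mem_image.mp hxbar
    have hfnc : ¬ ∃ c : Bool, f = fun _ => c := by
      simpa using (Finset.mem_filter.mp hfmem).2
    have horb : (Finset.univ.filter (fun f : ZMod p → Bool => ¬∃ c, f = fun _ => c)).filter
        (fun g => Quotient.mk (rotSetoid p) g = Quotient.mk (rotSetoid p) f)
        = Finset.image (fun σ : ZMod p => (fun x => f (x + σ))) Finset.univ := by
      ext g
      simp only [Finset.mem_filter, Finset.mem_univ, true_and, Finset.mem_image]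
      constructor
      · rintro ⟨hgnc, hq⟩
        obtain ⟨σ, hσ⟩ := (rotSetoid p).symm (Quotient.exact hq)
        exact ⟨σ, hσ.symm⟩
      · rintro ⟨σ, rfl⟩
        refine ⟨?_, Quotient.sound ⟨-σ, funext fun x => by simp⟩⟩
        rintro ⟨c, hc⟩
        apply hfnc
        refine ⟨c, funext fun x => ?_⟩
        have hx := congrFun hc (x - σ)
        rw [← hx, sub_add_cancel]
    rw [horb, Finset.sum_image (fun x _ y _ h => orbit_inj f hfnc h)]
    have hrot : ∑ σ : ZMod p, (Submodule.Quotient.mk (W a b p (fun x => f (x + σ)))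
        : A ⧸ commutatorSpan k A) = ∑ _σ : ZMod p, Submodule.Quotient.mk (W a b p f) :=
      Finset.sum_congr rfl (fun σ _ => mk_W_rot a b p f σ)
    rw [hrot, Finset.sum_const, Finset.card_univ, ZMod.card]
    rw [← Submodule.mkQ_apply, ← map_nsmul, Submodule.mkQ_apply]
    exact mk_p_nsmul p _
  rw [hconst, hrest, add_zero]

lemma mk_pow_comm (u v : A) (n : ℕ) :
    (Submodule.Quotient.mk ((u * v) ^ n) : A ⧸ commutatorSpan k A) =
      Submodule.Quotient.mk ((v * u) ^ n) := by
  cases n with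
  | zero => simp
  | succ n =>
    have base : SemiconjBy u (v * u) (u * v) := (mul_assoc u v u).symm
    have sc := base.pow_right n
    have e1 : (u * v) ^ (n + 1) = ((u * v) ^ n * u) * v := by rw [pow_succ, mul_assoc]
    have e2 : v * ((u * v) ^ n * u) = (v * u) ^ (n + 1) := by
      rw [← sc, ← mul_assoc, ← pow_succ']
    rw [e1, mk_mul_comm, e2]

lemma mk_pow_p_zero_of_mem (w : A) (hw : w ∈ commutatorSpan k A) :
    (Submodule.Quotient.mk (w ^ p) : A ⧸ commutatorSpan k A) = 0 := by
  refine Submodule.span_induction ?_ ?_ ?_ ?_ hw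
  · rintro x ⟨u, v, rfl⟩
    let φ : A →+ A ⧸ commutatorSpan k A :=
      AddMonoidHom.mk' (fun x : A => Submodule.Quotient.mk (x ^ p)) (fun x y => key x y p)
    show φ (u * v - v * u) = 0
    rw [map_sub]
    show Submodule.Quotient.mk ((u*v) ^ p) - Submodule.Quotient.mk ((v*u) ^ p) = 0
    rw [mk_pow_comm, sub_self]
  · rw [zero_pow (NeZero.ne p)]
    exact (Submodule.Quotient.mk_eq_zero _).mpr (Submodule.zero_mem _)
  · intro x y _ _ ihx ihy
    rw [key x y p, ihx, ihy, add_zero]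
  · intro c x _ ih
    rw [smul_pow, Submodule.Quotient.mk_smul, ih, smul_zero]

lemma master (n : ℕ) :
    (∀ x y : A, (Submodule.Quotient.mk ((x + y) ^ p ^ n) : A ⧸ commutatorSpan k A) =
        Submodule.Quotient.mk (x ^ p ^ n) + Submodule.Quotient.mk (y ^ p ^ n)) ∧
    (∀ w ∈ commutatorSpan k A,
        (Submodule.Quotient.mk (w ^ p ^ n) : A ⧸ commutatorSpan k A) = 0) := by
  induction n with
  | zero =>
    constructor
    · intro x y; simp [Submodule.Quotient.mk_add]
    · intro w hw; simpa using (Submodule.Quotient.mk_eq_zero _).mpr hw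
  | succ n ih =>
    have hpow : ∀ x : A, x ^ p ^ (n + 1) = (x ^ p ^ n) ^ p := by
      intro x; rw [pow_succ, pow_mul]
    constructor
    · intro x y
      rw [hpow, hpow, hpow]
      have hd : (x + y) ^ p ^ n - (x ^ p ^ n + y ^ p ^ n) ∈ commutatorSpan k A := by
        refine (Submodule.Quotient.eq _).mp ?_
        rw [ih.1 x y, Submodule.Quotient.mk_add]
      have hrw : (x + y) ^ p ^ n
          = (x ^ p ^ n + y ^ p ^ n) + ((x + y) ^ p ^ n - (x ^ p ^ n + y ^ p ^ n)) := by abel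
      rw [hrw, key _ _ p, mk_pow_p_zero_of_mem p _ hd, add_zero, key _ _ p]
    · intro w hw
      rw [hpow]
      exact mk_pow_p_zero_of_mem p _
        ((Submodule.Quotient.mk_eq_zero _).mp (ih.2 w hw))

end JacobsonAux

/-- For a field `k` of characteristic `p > 0` and an associative unital `k`-algebra `A`,
for all `a b ∈ A` and `n ∈ ℕ` the element `(a+b)^{p^n} - a^{p^n} - b^{p^n}` lies in `KA`;
consequently the `p^n`-power map induces a well-defined additive map on `A/KA`. -/
theorem pow_pn_add_sub_mem_commutatorSpan
    (k A : Type*) [Field k] [Ring A] [Algebra k A]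
    (p : ℕ) [Fact p.Prime] [CharP k p] :
    (∀ (a b : A) (n : ℕ),
        (a + b) ^ p ^ n - a ^ p ^ n - b ^ p ^ n ∈ commutatorSpan k A) ∧
    (∀ n : ℕ, ∃ φ : (A ⧸ commutatorSpan k A) →+ (A ⧸ commutatorSpan k A),
        ∀ a : A, φ (Submodule.Quotient.mk a) = Submodule.Quotient.mk (a ^ p ^ n)) := by
  haveI : NeZero p := ⟨(Fact.out : p.Prime).ne_zero⟩
  constructor
  · intro a b n
    have h := (JacobsonAux.master (k := k) (A := A) p n).1 a b
    have h2 : (a + b) ^ p ^ n - (a ^ p ^ n + b ^ p ^ n) ∈ commutatorSpan k A :=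
      (Submodule.Quotient.eq _).mp (h.trans (Submodule.Quotient.mk_add _).symm)
    simpa [sub_sub] using h2
  · intro n
    have hcong : ∀ x y : A, Submodule.quotientRel (commutatorSpan k A) x y →
        (Submodule.Quotient.mk (x ^ p ^ n) : A ⧸ commutatorSpan k A)
          = Submodule.Quotient.mk (y ^ p ^ n) := by
      intro x y hxy
      have hd : x - y ∈ commutatorSpan k A := (Submodule.quotientRel_def _).mp hxy
      have hrw : x = y + (x - y) := by abel
      rw [hrw, (JacobsonAux.master (k := k) (A := A) p n).1 y (x - y),
        (JacobsonAux.master (k := k) (A := A) p n).2 _ hd, add_zero]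
    refine ⟨AddMonoidHom.mk'
      (fun m => Quotient.liftOn' m
        (fun x => (Submodule.Quotient.mk (x ^ p ^ n) : A ⧸ commutatorSpan k A)) hcong)
      ?_, fun a => rfl⟩
    intro m₁ m₂
    refine Quotient.inductionOn₂' m₁ m₂ (fun x y => ?_)
    show (Submodule.Quotient.mk ((x + y) ^ p ^ n) : A ⧸ commutatorSpan k A)
      = Submodule.Quotient.mk (x ^ p ^ n) + Submodule.Quotient.mk (y ^ p ^ n)
    exact (JacobsonAux.master (k := k) (A := A) p n).1 x y
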